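/- arXiv:0812.3084 — 3 statements merged into one kernel-verified Lean document; each statement's English description precedes it below -/
import Mathlib

section
/- Let m ∈ ℕ and p ∈ (0,1). Suppose N ∼ Bin(m,p), N' has the conditional distribution of N given N > 0, and N'' − 1 ∼ Bin(m−1,p). Then for all k ∈ ℕ, P[N ≥ k] ≤ P[N' ≥ k] ≤ P[N'' ≥ k]. -/
open MeasureTheory ProbabilityTheory Filter Set Metric
open scoped ENNReal NNReal BigOperators Topology Classical

noncomputable section

/-- Side length `n^(1/d)` of the cube `C_n` of volume `n` in dimension `d`. -/
def sideLen (d n : ℕ) : ℝ := (n : ℝ) ^ ((d : ℝ)⁻¹)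

/-- The cube `C_n = [0, L)^d`. -/
def box (d : ℕ) (L : ℝ) : Set (Fin d → ℝ) := Set.univ.pi fun _ => Set.Ico (0 : ℝ) L

/-- The Euclidean toroidal distance on the cube `[0, L)^d`. -/
def torDist {d : ℕ} (L : ℝ) (x y : Fin d → ℝ) : ℝ :=
  Real.sqrt (∑ i, (⨅ k : ℤ, |x i - y i - k * L|) ^ 2)

/-- The toroidal ball `B_r(x) = {y ∈ C_n : D(x,y) ≤ r}`. -/
def torBall {d : ℕ} (L : ℝ) (x : Fin d → ℝ) (r : ℝ) : Set (Fin d → ℝ) :=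
  {y ∈ box d L | torDist L x y ≤ r}

/-- Addition (translation) in the torus `[0, L)^d`. -/
def torAdd {d : ℕ} (L : ℝ) (y x : Fin d → ℝ) : Fin d → ℝ :=
  fun i => L * Int.fract ((y i + x i) / L)

/-- The uniform probability measure on the cube `[0, L)^d`. -/
def uniformBox (d : ℕ) (L : ℝ) : Measure (Fin d → ℝ) :=
  ((L.toNNReal ^ d)⁻¹ : ℝ≥0) • volume.restrict (box d L)

/-- The joint law of `n` independent points uniformly distributed on the cube `C_n`
of volume `n`; a point configuration is `ω : Fin n → (Fin d → ℝ)`, with `U_i = ω i`. -/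
def binppLaw (d n : ℕ) : Measure (Fin n → Fin d → ℝ) :=
  Measure.pi fun _ => uniformBox d (sideLen d n)

/-- The total covered volume `V` of the union of toroidal balls of radius `ρ`
centered at the `n` points. -/
def coveredVol (d n : ℕ) (ρ : ℝ) (ω : Fin n → Fin d → ℝ) : ℝ :=
  (volume (⋃ i, torBall (sideLen d n) (ω i) ρ)).toReal

/-- The number `S` of isolated points: indices `i` with `𝒰_n ∩ B_ρ(U_i) = {U_i}`. -/
def isolCount (d n : ℕ) (ρ : ℝ) (ω : Fin n → Fin d → ℝ) : ℝ :=
  ∑ i, if Set.range ω ∩ torBall (sideLen d n) (ω i) ρ = {ω i} then 1 else 0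

/-- `π_d`: the volume of the unit ball in `ℝ^d`. -/
def unitBallVol (d : ℕ) : ℝ :=
  (volume (Metric.closedBall (0 : EuclideanSpace ℝ (Fin d)) 1)).toReal

/-- `φ = π_d ρ^d`. -/
def phi (d : ℕ) (ρ : ℝ) : ℝ := unitBallVol d * ρ ^ d

/-- The standard normal cumulative distribution function. -/
def stdGaussCDF (t : ℝ) : ℝ := (gaussianReal 0 1 (Set.Iic t)).toReal

/-- The Kolmogorov distance `D_X` between the law of the standardized version of `X`
and the standard normal. -/
def kolDist {Ω : Type*} [MeasurableSpace Ω] (P : Measure Ω) (X : Ω → ℝ) : ℝ :=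
  ⨆ t : ℝ,
    |(P {ω | (X ω - ∫ x, X x ∂P) / Real.sqrt (variance X P) ≤ t}).toReal - stdGaussCDF t|

/-- A fixed unit vector in `ℝ^d` (junk value `0` if `d = 0`). -/
def unitVec (d : ℕ) : EuclideanSpace ℝ (Fin d) :=
  if h : 0 < d then EuclideanSpace.single (⟨0, h⟩ : Fin d) 1 else 0

/-- `ω_d(r)`: the volume of the union of two unit balls in `ℝ^d` whose centers are
at distance `r` apart. -/
def omegaVol (d : ℕ) (r : ℝ) : ℝ :=
  (volume (Metric.closedBall (0 : EuclideanSpace ℝ (Fin d)) 1 ∪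
      Metric.closedBall (r • unitVec d) 1)).toReal

/-- The integral `J_{r,d}(ρ) = d π_d ∫_0^r exp(-ρ^d ω_d(t)) t^{d-1} dt`. -/
def Jint (r : ℝ) (d : ℕ) (ρ : ℝ) : ℝ :=
  d * unitBallVol d * ∫ t in (0:ℝ)..r, Real.exp (-(ρ ^ d * omegaVol d t)) * t ^ (d - 1)

/-- The limiting variance density `g_V(ρ)`. -/
def gV (d : ℕ) (ρ : ℝ) : ℝ :=
  ρ ^ d * Jint 2 d ρ - (2 ^ d * phi d ρ + phi d ρ ^ 2) * Real.exp (-(2 * phi d ρ))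

/-- The limiting variance density `g_S(ρ)`. -/
def gS (d : ℕ) (ρ : ℝ) : ℝ :=
  Real.exp (-phi d ρ) - (1 + (2 ^ d - 2) * phi d ρ + phi d ρ ^ 2) * Real.exp (-(2 * phi d ρ))
    + ρ ^ d * (Jint 2 d ρ - Jint 1 d ρ)

/-- `κ_d`: the maximum number of closed unit balls in `ℝ^d` that can be packed so that
they all intersect a closed unit ball at the origin but are pairwise disjoint. -/
def kappa (d : ℕ) : ℕ :=
  sSup {k : ℕ | ∃ c : Fin k → EuclideanSpace ℝ (Fin d),
    (∀ i, (Metric.closedBall (c i) 1 ∩ Metric.closedBall 0 1).Nonempty) ∧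
    Pairwise fun i j => Disjoint (Metric.closedBall (c i) 1) (Metric.closedBall (c j) 1)}

/-- `η_V(n, ρ)`. -/
def etaV (d n : ℕ) (ρ : ℝ) : ℝ :=
  2 * phi d ρ ^ 2 * ((3 ^ d + 1) * phi d ρ + 1) ^ 2 *
      (1 + (2 ^ d + 1) * 6 ^ d * phi d ρ +
        ((2 * n - 6 ^ d * phi d ρ) / (n - 6 ^ d * phi d ρ)) * 6 ^ (2 * d) * phi d ρ ^ 2) +
    2 * phi d ρ ^ 4 *
      (3 * (4 ^ d + 2 ^ d) * phi d ρ +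
        3 * 4 ^ d * phi d ρ ^ 2 * ((2 * n - 3 * 2 ^ d * phi d ρ) / (n - 3 * 2 ^ d * phi d ρ)) +
        4 + 2 / n)

/-- `η_S(n, ρ)`. -/
def etaS (d n : ℕ) (ρ : ℝ) : ℝ :=
  2 * (1 + 2 * (kappa d : ℝ)) ^ 2 *
      (1 + (2 ^ d + 1) * 3 ^ d * phi d ρ +
        ((2 * n - 3 ^ d * phi d ρ) / (n - 3 ^ d * phi d ρ)) * 9 ^ d * phi d ρ ^ 2) +
    (((1 : ℝ) + kappa d) ^ 2 / 2) *
      ((2 ^ d + 2 * 3 ^ d + 3) * phi d ρ +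
        (2 ^ (d + 1) + 1) *
          ((2 * n - (2 ^ (d + 1) + 1) * phi d ρ) / (n - (2 ^ (d + 1) + 1) * phi d ρ)) *
          phi d ρ ^ 2 +
        (4 * n - 2) / (n - 1))

namespace BinCondAux

def tailSum (p : ℝ) (m k : ℕ) : ℝ :=
  ∑ j ∈ Finset.Ico k (m + 1), (m.choose j : ℝ) * p ^ j * (1 - p) ^ (m - j)

variable {p : ℝ}

lemma term_nonneg (hp : p ∈ Set.Ioo (0:ℝ) 1) (m j : ℕ) :
    0 ≤ (m.choose j : ℝ) * p ^ j * (1 - p) ^ (m - j) := by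
  have h1 : (0:ℝ) ≤ p := le_of_lt hp.1
  have h2 : (0:ℝ) ≤ 1 - p := by have := hp.2; linarith
  positivity

lemma tailSum_nonneg (hp : p ∈ Set.Ioo (0:ℝ) 1) (m k : ℕ) : 0 ≤ tailSum p m k :=
  Finset.sum_nonneg fun j _ => term_nonneg hp m j

lemma tailSum_zero (m : ℕ) : tailSum p m 0 = 1 := by
  have h := add_pow p (1 - p) m
  simp only [add_sub_cancel, one_pow] at h
  rw [tailSum, ← Finset.range_eq_Ico]
  conv_rhs => rw [h]
  exact Finset.sum_congr rfl fun j _ => by ring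

lemma tailSum_anti (hp : p ∈ Set.Ioo (0:ℝ) 1) (m : ℕ) {k l : ℕ} (hkl : k ≤ l) :
    tailSum p m l ≤ tailSum p m k := by
  apply Finset.sum_le_sum_of_subset_of_nonneg
  · exact Finset.Ico_subset_Ico hkl le_rfl
  · exact fun j _ _ => term_nonneg hp m j

lemma tailSum_one (m : ℕ) : tailSum p m 1 = 1 - (1 - p) ^ m := by
  have h0 : tailSum p m 0 = (1:ℝ) * p ^ 0 * (1 - p) ^ (m - 0) + tailSum p m 1 := by
    rw [tailSum, Finset.sum_eq_sum_Ico_succ_bot (Nat.succ_pos m)]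
    simp [tailSum]
  have h1 := tailSum_zero (p := p) m
  simp only [pow_zero, Nat.sub_zero, one_mul, mul_one] at h0
  linarith

lemma tailSum_rec (m k : ℕ) :
    tailSum p (m + 1) (k + 1) = p * tailSum p m k + (1 - p) * tailSum p m (k + 1) := by
  have hshift : tailSum p (m+1) (k+1)
      = ∑ i ∈ Finset.Ico k (m+1), ((m+1).choose (i+1) : ℝ) * p ^ (i+1) * (1-p) ^ (m - i) := by
    rw [tailSum, ← Finset.map_add_right_Ico k (m+1) 1, Finset.sum_map]
    refine Finset.sum_congr rfl fun i _ => ?_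
    simp [Nat.succ_sub_succ]
  have hsplit : ∀ i : ℕ, ((m+1).choose (i+1) : ℝ) = (m.choose i : ℝ) + (m.choose (i+1) : ℝ) := by
    intro i; rw [Nat.choose_succ_succ]; push_cast; ring
  rw [hshift]
  have : ∑ i ∈ Finset.Ico k (m+1), ((m+1).choose (i+1) : ℝ) * p ^ (i+1) * (1-p) ^ (m - i)
      = (∑ i ∈ Finset.Ico k (m+1), p * ((m.choose i : ℝ) * p ^ i * (1-p) ^ (m - i)))
        + ∑ i ∈ Finset.Ico k (m+1), (m.choose (i+1) : ℝ) * p ^ (i+1) * (1-p) ^ (m - i) := by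
    rw [← Finset.sum_add_distrib]
    refine Finset.sum_congr rfl fun i _ => ?_
    rw [hsplit i]; ring
  rw [this, ← Finset.mul_sum]
  congr 1
  -- second sum equals (1-p) * tailSum p m (k+1)
  have h2 : ∑ i ∈ Finset.Ico k (m+1), (m.choose (i+1) : ℝ) * p ^ (i+1) * (1-p) ^ (m - i)
      = ∑ j ∈ Finset.Ico (k+1) (m+2), (m.choose j : ℝ) * p ^ j * (1-p) ^ (m + 1 - j) := by
    rw [← Finset.map_add_right_Ico k (m+1) 1, Finset.sum_map]
    refine Finset.sum_congr rfl fun i _ => ?_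
    simp [Nat.succ_sub_succ]
  rw [h2]
  by_cases hk : k + 1 ≤ m + 1
  · rw [show m + 2 = (m + 1) + 1 from rfl, Finset.sum_Ico_succ_top hk]
    have htop : (m.choose (m+1) : ℝ) * p ^ (m+1) * (1-p) ^ (m + 1 - (m+1)) = 0 := by
      simp [Nat.choose_succ_self]
    rw [htop, add_zero, tailSum, Finset.mul_sum]
    refine Finset.sum_congr rfl fun j hj => ?_
    have hjm : j ≤ m := by
      have := (Finset.mem_Ico.mp hj).2; omega
    have : m + 1 - j = (m - j) + 1 := by omega
    rw [this]; ring
  · have h1 : Finset.Ico (k+1) (m+2) = ∅ := by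
      apply Finset.Ico_eq_empty; omega
    have h2' : Finset.Ico (k+1) (m+1) = ∅ := by
      apply Finset.Ico_eq_empty; omega
    rw [h1, tailSum, h2']; simp

lemma tailSum_mono_m (hp : p ∈ Set.Ioo (0:ℝ) 1) (m k : ℕ) :
    tailSum p m k ≤ tailSum p (m+1) k := by
  cases k with
  | zero => rw [tailSum_zero, tailSum_zero]
  | succ k =>
    rw [tailSum_rec]
    have h1 : tailSum p m (k+1) ≤ tailSum p m k := tailSum_anti hp m (Nat.le_succ k)
    nlinarith [hp.1, hp.2, tailSum_nonneg hp m (k+1)]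

lemma tailSum_key (hp : p ∈ Set.Ioo (0:ℝ) 1) :
    ∀ n k : ℕ, tailSum p (n+1) (k+1) ≤ (1 - (1-p)^(n+1)) * tailSum p n k := by
  intro n
  induction n with
  | zero =>
    intro k
    cases k with
    | zero =>
      rw [tailSum_one, tailSum_zero]; simp
    | succ k =>
      have he : tailSum p 1 (k+2) = 0 := by
        rw [tailSum, Finset.Ico_eq_empty (by omega)]; simp
      rw [he]
      have h1 : (0:ℝ) ≤ 1 - (1-p)^(0+1) := by simp; linarith [hp.1]
      exact mul_nonneg h1 (tailSum_nonneg hp 0 (k+1))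
  | succ n ih =>
    intro k
    cases k with
    | zero =>
      rw [tailSum_one, tailSum_zero]; simp
    | succ k =>
      have hrec := tailSum_rec (p := p) (n+1) (k+1)
      have h1 : tailSum p (n+1) (k+2) ≤ (1 - (1-p)^(n+1)) * tailSum p n (k+1) := ih (k+1)
      have h2 : tailSum p n (k+1) ≤ tailSum p (n+1) (k+1) := tailSum_mono_m hp n (k+1)
      have hcoef : (0:ℝ) ≤ 1 - (1-p)^(n+1) := by
        have : (1-p)^(n+1) ≤ 1 := pow_le_one₀ (by linarith [hp.2]) (by linarith [hp.1])
        linarith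
      have h3 : tailSum p (n+1) (k+2) ≤ (1 - (1-p)^(n+1)) * tailSum p (n+1) (k+1) :=
        le_trans h1 (mul_le_mul_of_nonneg_left h2 hcoef)
      have h4 := mul_le_mul_of_nonneg_left h3 (show (0:ℝ) ≤ 1 - p by linarith [hp.2])
      have hq : (0:ℝ) ≤ tailSum p (n+1) (k+1) := tailSum_nonneg hp (n+1) (k+1)
      rw [hrec, pow_succ]
      nlinarith [h4, hq]

open MeasureTheory

lemma tsum_shift_ofReal (a : ℕ → ℝ) (ha : ∀ j, 0 ≤ a j) (m : ℕ) (h0 : ∀ j, m < j → a j = 0)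
    (k : ℕ) :
    ∑' j : ℕ, ENNReal.ofReal (a (j + k)) = ENNReal.ofReal (∑ i ∈ Finset.Ico k (m + 1), a i) := by
  have h1 : ∑' j : ℕ, ENNReal.ofReal (a (j + k))
      = ∑ j ∈ Finset.range (m + 1), ENNReal.ofReal (a (j + k)) := by
    apply tsum_eq_sum
    intro j hj
    have : m < j + k := by
      have := Finset.mem_range.not.mp hj; omega
    rw [h0 _ this]; simp
  rw [h1, ← ENNReal.ofReal_sum_of_nonneg (fun j _ => ha _)]
  congr 1
  have h2 : ∑ i ∈ Finset.Ico k (m + 1 + k), a i = ∑ j ∈ Finset.range (m + 1), a (j + k) := by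
    rw [Finset.sum_Ico_eq_sum_range]
    simp only [show m + 1 + k - k = m + 1 from by omega]
    exact Finset.sum_congr rfl fun j _ => by rw [add_comm]
  rw [← h2]
  symm
  apply Finset.sum_subset (Finset.Ico_subset_Ico le_rfl (by omega))
  intro i hi hni
  have h3 := Finset.mem_Ico.mp hi
  have h4 : m < i := by
    rcases Finset.mem_Ico.not.mp hni with h
    omega
  exact h0 _ h4

lemma measure_tail_ofReal {Ω : Type*} [MeasurableSpace Ω] (P : Measure Ω)
    [IsProbabilityMeasure P] (N : Ω → ℕ) (a : ℕ → ℝ)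
    (ha : ∀ j, P {ω | N ω = j} = ENNReal.ofReal (a j))
    (ha0 : ∀ j, 0 ≤ a j) (m : ℕ) (hvan : ∀ j, m < j → a j = 0)
    (hsum : ∑ i ∈ Finset.Ico 0 (m + 1), a i = 1) (k : ℕ) :
    P {ω | k ≤ N ω} = ENNReal.ofReal (∑ i ∈ Finset.Ico k (m + 1), a i) := by
  have hofr : ∑' j : ℕ, P {ω | N ω = j + k}
      = ENNReal.ofReal (∑ i ∈ Finset.Ico k (m + 1), a i) := by
    have he : ∀ j : ℕ, P {ω | N ω = j + k} = ENNReal.ofReal (a (j + k)) := fun j => ha _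
    simp_rw [he]
    exact tsum_shift_ofReal a ha0 m hvan k
  -- upper bound
  have hcover : {ω | k ≤ N ω} = ⋃ j : ℕ, {ω | N ω = j + k} := by
    ext ω
    simp only [Set.mem_setOf_eq, Set.mem_iUnion]
    constructor
    · intro h; exact ⟨N ω - k, by omega⟩
    · rintro ⟨j, hj⟩; omega
  have hup : P {ω | k ≤ N ω} ≤ ENNReal.ofReal (∑ i ∈ Finset.Ico k (m + 1), a i) := by
    rw [hcover, ← hofr]
    exact measure_iUnion_le _
  -- lower bound
  have hreal : (∑ j ∈ Finset.range k, a j) + (∑ i ∈ Finset.Ico k (m + 1), a i) = 1 := by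
    by_cases hk : k ≤ m + 1
    · rw [Finset.range_eq_Ico, Finset.sum_Ico_consecutive a (Nat.zero_le k) hk, hsum]
    · rw [Finset.Ico_eq_empty (by omega), Finset.sum_empty, add_zero, ← hsum,
        Finset.range_eq_Ico]
      symm
      apply Finset.sum_subset (Finset.Ico_subset_Ico le_rfl (by omega))
      intro i hi hni
      have h3 := Finset.mem_Ico.mp hi
      have h4 : m < i := by
        rcases Finset.mem_Ico.not.mp hni with h; omega
      exact hvan _ h4
  have hG : ∑ j ∈ Finset.range k, P {ω | N ω = j}
      = ENNReal.ofReal (∑ j ∈ Finset.range k, a j) := by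
    rw [ENNReal.ofReal_sum_of_nonneg (fun j _ => ha0 j)]
    exact Finset.sum_congr rfl fun j _ => ha j
  have hunion : (1:ℝ≥0∞) ≤ P {ω | k ≤ N ω} + ∑ j ∈ Finset.range k, P {ω | N ω = j} := by
    have hcov : (Set.univ : Set Ω) ⊆ {ω | k ≤ N ω} ∪ ⋃ j ∈ Finset.range k, {ω | N ω = j} := by
      intro ω _
      by_cases h : k ≤ N ω
      · exact Or.inl h
      · exact Or.inr (Set.mem_biUnion (Finset.mem_range.mpr (by omega)) rfl)
    calc (1:ℝ≥0∞) = P Set.univ := (measure_univ).symm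
      _ ≤ P ({ω | k ≤ N ω} ∪ ⋃ j ∈ Finset.range k, {ω | N ω = j}) := measure_mono hcov
      _ ≤ P {ω | k ≤ N ω} + P (⋃ j ∈ Finset.range k, {ω | N ω = j}) := measure_union_le _ _
      _ ≤ P {ω | k ≤ N ω} + ∑ j ∈ Finset.range k, P {ω | N ω = j} := by
          gcongr
          exact measure_biUnion_finset_le _ _
  have hsplit : ENNReal.ofReal (∑ j ∈ Finset.range k, a j)
      + ENNReal.ofReal (∑ i ∈ Finset.Ico k (m + 1), a i) = 1 := by
    rw [← ENNReal.ofReal_add (Finset.sum_nonneg fun j _ => ha0 j)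
      (Finset.sum_nonneg fun j _ => ha0 j), hreal, ENNReal.ofReal_one]
  have hlow : ENNReal.ofReal (∑ i ∈ Finset.Ico k (m + 1), a i) ≤ P {ω | k ≤ N ω} := by
    have hfin : ENNReal.ofReal (∑ j ∈ Finset.range k, a j) ≠ ⊤ := ENNReal.ofReal_ne_top
    have h1 : ENNReal.ofReal (∑ i ∈ Finset.Ico k (m + 1), a i)
        = 1 - ENNReal.ofReal (∑ j ∈ Finset.range k, a j) :=
      ENNReal.eq_sub_of_add_eq hfin (by rw [add_comm]; exact hsplit)
    rw [h1, tsub_le_iff_right, ← hG]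
    exact hunion
  exact le_antisymm hup hlow

end BinCondAux

open BinCondAux

/-- Lemma 3.2 (Goldstein–Penrose): a binomial variable conditioned to be positive is
stochastically between the binomial and one plus a binomial with one fewer trial.
Here `N ∼ Bin(m,p)`, `N'` has the conditional distribution of `N` given `N > 0`
(so that `P[N' = j] P[N > 0] = P[N = j]` for `j ≥ 1` and `P[N' = 0] = 0`), and
`N'' - 1 ∼ Bin(m-1,p)`. -/
theorem binomial_conditioned_stochastic_bounds
    {Ω : Type*} [MeasurableSpace Ω] (P : Measure Ω) [IsProbabilityMeasure P]
    (m : ℕ) (hm : 1 ≤ m) (p : ℝ) (hp : p ∈ Set.Ioo (0 : ℝ) 1)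
    (N N' N'' : Ω → ℕ)
    (hN : ∀ k : ℕ, (P {ω | N ω = k}).toReal = m.choose k * p ^ k * (1 - p) ^ (m - k))
    (hN' : ∀ k : ℕ, 1 ≤ k →
      (P {ω | N' ω = k}).toReal * (P {ω | 0 < N ω}).toReal = (P {ω | N ω = k}).toReal)
    (hN'0 : P {ω | N' ω = 0} = 0)
    (hN'' : ∀ k : ℕ, (P {ω | N'' ω = k + 1}).toReal =
      (m - 1).choose k * p ^ k * (1 - p) ^ (m - 1 - k))
    (hN''0 : P {ω | N'' ω = 0} = 0)
    (k : ℕ) :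
    P {ω | k ≤ N ω} ≤ P {ω | k ≤ N' ω} ∧ P {ω | k ≤ N' ω} ≤ P {ω | k ≤ N'' ω} := by
  obtain ⟨hp0, hp1⟩ := hp
  have hpio : p ∈ Set.Ioo (0:ℝ) 1 := ⟨hp0, hp1⟩
  have h1p0 : (0:ℝ) ≤ 1 - p := by linarith
  set q : ℝ := 1 - (1 - p) ^ m with hqdef
  have hq0 : 0 < q := by
    have h : (1 - p) ^ m < 1 := pow_lt_one₀ h1p0 (by linarith) (by omega)
    rw [hqdef]; linarith
  have hq1 : q ≤ 1 := by
    have h : (0:ℝ) ≤ (1 - p) ^ m := pow_nonneg h1p0 m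
    rw [hqdef]; linarith
  -- description of N
  set a : ℕ → ℝ := fun j => (m.choose j : ℝ) * p ^ j * (1 - p) ^ (m - j) with hadef
  have ha0 : ∀ j, 0 ≤ a j := fun j => term_nonneg hpio m j
  have havan : ∀ j, m < j → a j = 0 := by
    intro j hj; simp [hadef, Nat.choose_eq_zero_of_lt hj]
  have hamem : ∀ j, P {ω | N ω = j} = ENNReal.ofReal (a j) := by
    intro j
    rw [← ENNReal.ofReal_toReal (measure_ne_top P _), hN j]
  have hasum : ∑ i ∈ Finset.Ico 0 (m + 1), a i = 1 := tailSum_zero m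
  have hNtail : ∀ k, P {ω | k ≤ N ω} = ENNReal.ofReal (tailSum p m k) := fun k =>
    measure_tail_ofReal P N a hamem ha0 m havan hasum k
  -- value of q
  have hqmeas : (P {ω | 0 < N ω}).toReal = q := by
    have hset : {ω | 0 < N ω} = {ω | 1 ≤ N ω} := by
      ext ω; simp [Nat.lt_iff_add_one_le]
    rw [hset, hNtail 1, tailSum_one, ENNReal.toReal_ofReal (by linarith)]
  -- description of N'
  set a' : ℕ → ℝ := fun j => if j = 0 then 0 else a j / q with ha'def
  have ha'0 : ∀ j, 0 ≤ a' j := by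
    intro j
    rw [ha'def]
    by_cases h : j = 0 <;> simp [h]
    exact div_nonneg (ha0 j) (le_of_lt hq0)
  have ha'van : ∀ j, m < j → a' j = 0 := by
    intro j hj
    have : j ≠ 0 := by omega
    simp [ha'def, this, havan j hj]
  have ha'mem : ∀ j, P {ω | N' ω = j} = ENNReal.ofReal (a' j) := by
    intro j
    cases j with
    | zero => rw [hN'0]; simp [ha'def]
    | succ i =>
      have h := hN' (i + 1) (by omega)
      rw [hqmeas] at h
      have htr : (P {ω | N' ω = i + 1}).toReal = a (i + 1) / q := by
        rw [eq_div_iff (ne_of_gt hq0)]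
        rw [h, hN (i + 1)]
      rw [← ENNReal.ofReal_toReal (measure_ne_top P _), htr]
      simp [ha'def]
  have hIcosum : ∀ k : ℕ, 1 ≤ k → ∑ i ∈ Finset.Ico k (m + 1), a' i = tailSum p m k / q := by
    intro k hk
    rw [tailSum, Finset.sum_div]
    refine Finset.sum_congr rfl fun j hj => ?_
    have : j ≠ 0 := by have := (Finset.mem_Ico.mp hj).1; omega
    simp [ha'def, this, hadef]
  have ha'sum : ∑ i ∈ Finset.Ico 0 (m + 1), a' i = 1 := by
    rw [Finset.sum_eq_sum_Ico_succ_bot (Nat.succ_pos m)]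
    have h0 : a' 0 = 0 := by simp [ha'def]
    rw [h0, zero_add, hIcosum 1 le_rfl, tailSum_one]
    exact div_self (ne_of_gt hq0)
  have hN'tail : ∀ k : ℕ, P {ω | k + 1 ≤ N' ω} = ENNReal.ofReal (tailSum p m (k + 1) / q) := by
    intro k
    rw [measure_tail_ofReal P N' a' ha'mem ha'0 m ha'van ha'sum (k + 1), hIcosum (k + 1) (by omega)]
  -- description of N''
  set b : ℕ → ℝ := fun j => ((m - 1).choose j : ℝ) * p ^ j * (1 - p) ^ (m - 1 - j) with hbdef
  set a'' : ℕ → ℝ := fun j => if j = 0 then 0 else b (j - 1) with ha''def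
  have ha''0 : ∀ j, 0 ≤ a'' j := by
    intro j
    rw [ha''def]
    by_cases h : j = 0 <;> simp [h]
    exact term_nonneg hpio (m - 1) (j - 1)
  have ha''van : ∀ j, m < j → a'' j = 0 := by
    intro j hj
    have h1 : j ≠ 0 := by omega
    have h2 : m - 1 < j - 1 := by omega
    simp [ha''def, h1, hbdef, Nat.choose_eq_zero_of_lt h2]
  have ha''mem : ∀ j, P {ω | N'' ω = j} = ENNReal.ofReal (a'' j) := by
    intro j
    cases j with
    | zero => rw [hN''0]; simp [ha''def]
    | succ i =>
      rw [← ENNReal.ofReal_toReal (measure_ne_top P _), hN'' i]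
      simp [ha''def, hbdef]
  have hIcosum'' : ∀ k : ℕ, ∑ i ∈ Finset.Ico (k + 1) (m + 1), a'' i = tailSum p (m - 1) k := by
    intro k
    rw [tailSum, show m - 1 + 1 = m from by omega, Finset.sum_Ico_eq_sum_range,
      Finset.sum_Ico_eq_sum_range, show m + 1 - (k + 1) = m - k from by omega]
    refine Finset.sum_congr rfl fun i _ => ?_
    have h1 : k + 1 + i ≠ 0 := by omega
    have h2 : k + 1 + i - 1 = k + i := by omega
    simp [ha''def, h1, h2, hbdef]
  have ha''sum : ∑ i ∈ Finset.Ico 0 (m + 1), a'' i = 1 := by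
    rw [Finset.sum_eq_sum_Ico_succ_bot (Nat.succ_pos m)]
    have h0 : a'' 0 = 0 := by simp [ha''def]
    rw [h0, zero_add, show (0:ℕ) + 1 = 0 + 1 from rfl, hIcosum'' 0, tailSum_zero]
  have hN''tail : ∀ k : ℕ, P {ω | k + 1 ≤ N'' ω} = ENNReal.ofReal (tailSum p (m - 1) k) := by
    intro k
    rw [measure_tail_ofReal P N'' a'' ha''mem ha''0 m ha''van ha''sum (k + 1), hIcosum'' k]
  -- the two inequalities
  cases k with
  | zero =>
    have e1 : {ω | 0 ≤ N ω} = Set.univ := Set.eq_univ_of_forall fun ω => Nat.zero_le _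
    have e2 : {ω | 0 ≤ N' ω} = Set.univ := Set.eq_univ_of_forall fun ω => Nat.zero_le _
    have e3 : {ω | 0 ≤ N'' ω} = Set.univ := Set.eq_univ_of_forall fun ω => Nat.zero_le _
    rw [e1, e2, e3]
    exact ⟨le_rfl, le_rfl⟩
  | succ k =>
    rw [hNtail (k + 1), hN'tail k, hN''tail k]
    have ht0 : 0 ≤ tailSum p m (k + 1) := tailSum_nonneg hpio m (k + 1)
    constructor
    · apply ENNReal.ofReal_le_ofReal
      rw [le_div_iff₀ hq0]
      nlinarith
    · apply ENNReal.ofReal_le_ofReal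
      rw [div_le_iff₀ hq0]
      have key := tailSum_key hpio (m - 1) k
      rw [show m - 1 + 1 = m from by omega] at key
      calc tailSum p m (k + 1) ≤ (1 - (1 - p) ^ m) * tailSum p (m - 1) k := key
        _ = tailSum p (m - 1) k * q := by rw [hqdef]; ring

end
end

section
/- Suppose Y is a random variable given by Y = a P[A | ℱ], where ℱ is a σ-algebra, a > 0 is a constant, and A is an event with 0 < P[A] < 1. If Y' is a random variable whose distribution equals the conditional distribution of Y given A, then Y' has the Y size-biased distribution. -/
open MeasureTheory ProbabilityTheory Filter Set Metric
open scoped ENNReal NNReal BigOperators Topology Classical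

noncomputable section

/-- Lemma 4.1 (Goldstein–Penrose): size-biasing a conditional probability.
If `Y = a P[A|ℱ]` and `Y'` has the conditional distribution of `Y` given `A`,
then `Y'` has the `Y` size-biased distribution. -/
theorem cond_prob_size_bias
    {Ω : Type*} [mΩ : MeasurableSpace Ω] (P : Measure Ω) [IsProbabilityMeasure P]
    (F : MeasurableSpace Ω) (hF : F ≤ mΩ)
    (A : Set Ω) (hA : MeasurableSet[mΩ] A) (hA0 : 0 < P A) (hA1 : P A < 1)
    (a : ℝ) (ha : 0 < a)
    (Y : Ω → ℝ)
    (hY : Y = fun ω => a * (P[A.indicator (fun _ => (1 : ℝ))|F]) ω)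
    {Ω' : Type*} [MeasurableSpace Ω'] (P' : Measure Ω') [IsProbabilityMeasure P']
    (Y' : Ω' → ℝ) (hY'meas : Measurable Y')
    (hY'dist : Measure.map Y' P' = @Measure.map Ω ℝ mΩ _ Y (@ProbabilityTheory.cond Ω mΩ P A)) :
    ∀ g : ℝ → ℝ, Continuous g → (∃ C, ∀ x, |g x| ≤ C) →
      ∫ ω, Y ω * g (Y ω) ∂P = (∫ ω, Y ω ∂P) * ∫ ω', g (Y' ω') ∂P' := by
  intro g hg hgb
  obtain ⟨C, hC⟩ := hgb
  letI : MeasurableSpace Ω := mΩ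
  have hPA : (P A).toReal ≠ 0 := by
    simp [ENNReal.toReal_eq_zero_iff, hA0.ne', (measure_lt_top P A).ne]
  set ind : Ω → ℝ := A.indicator (fun _ => (1 : ℝ)) with hind
  set μY : Ω → ℝ := P[ind|F] with hμY
  have hμYsm : StronglyMeasurable[F] μY := stronglyMeasurable_condExp
  have hYsm : StronglyMeasurable[F] Y := by
    rw [hY]; exact hμYsm.const_mul a
  have hYm : @Measurable Ω ℝ mΩ _ Y := (hYsm.mono hF).measurable
  set h : Ω → ℝ := fun ω => g (Y ω) with hh
  have hhsm : StronglyMeasurable[F] h := hg.comp_stronglyMeasurable hYsm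
  have hhm : @Measurable Ω ℝ mΩ _ h := (hhsm.mono hF).measurable
  have hind_int : Integrable ind P := (integrable_const (1 : ℝ)).indicator hA
  have hh_int : Integrable h P :=
    (integrable_const C).mono' hhm.aestronglyMeasurable
      (Filter.Eventually.of_forall fun ω => by simpa [Real.norm_eq_abs] using hC (Y ω))
  have hC0 : 0 ≤ C := le_trans (abs_nonneg _) (hC 0)
  have hhind_int : Integrable (h * ind) P := by
    refine hind_int.bdd_mul (c := C) hhm.aestronglyMeasurable (Filter.Eventually.of_forall fun ω => ?_)
    simpa [Real.norm_eq_abs] using hC (Y ω)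
  have pull : P[h * ind|F] =ᵐ[P] h * μY :=
    condExp_stronglyMeasurable_mul_of_bound hF hhsm hind_int C
      (Filter.Eventually.of_forall fun ω => by simpa [Real.norm_eq_abs] using hC (Y ω))
  have key : ∫ ω, h ω * μY ω ∂P = ∫ ω in A, h ω ∂P := by
    have h1 : ∫ ω, h ω * μY ω ∂P = ∫ ω, (P[h * ind|F]) ω ∂P :=
      (integral_congr_ae pull).symm
    have h2 : ∫ ω, (P[h * ind|F]) ω ∂P = ∫ ω, (h * ind) ω ∂P := integral_condExp hF
    have h3 : ∫ ω, (h * ind) ω ∂P = ∫ ω in A, h ω ∂P := by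
      rw [← integral_indicator hA]
      refine integral_congr_ae (Filter.Eventually.of_forall fun ω => ?_)
      by_cases hω : ω ∈ A <;> simp [hind, Set.indicator_apply, hω]
    rw [h1, h2, h3]
  have hYint : ∫ ω, Y ω ∂P = a * (P A).toReal := by
    rw [hY]
    rw [integral_const_mul]
    rw [show ∫ ω, μY ω ∂P = ∫ ω, ind ω ∂P from integral_condExp hF]
    rw [hind, integral_indicator_const (1 : ℝ) hA]
    simp [Measure.real]
  have hY'int : ∫ ω', g (Y' ω') ∂P' = (P A).toReal⁻¹ * ∫ ω in A, h ω ∂P := by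
    have e1 : ∫ ω', g (Y' ω') ∂P' = ∫ x, g x ∂(Measure.map Y' P') :=
      (integral_map hY'meas.aemeasurable hg.aestronglyMeasurable).symm
    rw [e1, hY'dist, integral_map hYm.aemeasurable hg.aestronglyMeasurable]
    rw [ProbabilityTheory.cond, integral_smul_measure]
    rw [ENNReal.toReal_inv]
    rfl
  have hLHS : ∫ ω, Y ω * g (Y ω) ∂P = a * ∫ ω in A, h ω ∂P := by
    rw [← key, ← integral_const_mul]
    refine integral_congr_ae (Filter.Eventually.of_forall fun ω => ?_)
    simp only [hh, hY]; ring
  rw [hLHS, hYint, hY'int]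
  field_simp


end
end

section
/- Let X be an integer-valued random variable with SD(X) = σ ∈ (0, ∞). Then D_X ≥ (1/2) σ^{−1} f_Z(σ^{−1}), where f_Z(t) = (2π)^{−1/2} e^{−t²/2} is the standard normal density. -/
open MeasureTheory ProbabilityTheory Filter Set Metric
open scoped ENNReal NNReal BigOperators Topology Classical

noncomputable section

lemma stdGaussCDF_eq' (t : ℝ) :
    stdGaussCDF t = ∫ x in Set.Iic t, gaussianPDFReal 0 1 x := by
  rw [stdGaussCDF, gaussianReal_apply_eq_integral 0 one_ne_zero,
    ENNReal.toReal_ofReal (integral_nonneg fun x => gaussianPDFReal_nonneg _ _ _)]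

lemma gaussianPDFReal_one' (x : ℝ) :
    gaussianPDFReal 0 1 x = (Real.sqrt (2 * Real.pi))⁻¹ * Real.exp (-x ^ 2 / 2) := by
  simp [gaussianPDFReal]

/-- The lower-bound argument in the proof of (3.7) of Goldstein–Penrose: for any
integer-valued random variable `X` with standard deviation `σ ∈ (0,∞)`,
`D_X ≥ (1/2) σ⁻¹ f_Z(σ⁻¹)` where `f_Z` is the standard normal density. -/
theorem integer_valued_kolDist_lower_bound
    {Ω : Type*} [MeasurableSpace Ω] (P : Measure Ω) [IsProbabilityMeasure P]
    (X : Ω → ℝ) (hint : ∀ ω, ∃ k : ℤ, X ω = k)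
    (hvar : 0 < variance X P) :
    (1 / 2) * (Real.sqrt (variance X P))⁻¹ *
        ((Real.sqrt (2 * Real.pi))⁻¹ *
          Real.exp (-((Real.sqrt (variance X P))⁻¹) ^ 2 / 2)) ≤
      kolDist P X := by
  have hπ : (0:ℝ) < Real.sqrt (2 * Real.pi) := Real.sqrt_pos.2 (by positivity)
  set σ : ℝ := Real.sqrt (variance X P) with hσdef
  have hσ : 0 < σ := Real.sqrt_pos.2 hvar
  set m : ℝ := ∫ x, X x ∂P with hm
  set k : ℤ := ⌊m⌋ with hk
  set a : ℝ := ((k : ℝ) - m) / σ with ha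
  set b : ℝ := ((k : ℝ) + 1 - m) / σ with hb
  have hba : b - a = σ⁻¹ := by
    rw [ha, hb, ← sub_div, show (k:ℝ) + 1 - m - (k - m) = 1 by ring, one_div]
  have hab : a < b := by
    have : (0:ℝ) < σ⁻¹ := inv_pos.2 hσ
    linarith
  have hka : (k : ℝ) ≤ m := Int.floor_le m
  have hkb : m < (k : ℝ) + 1 := Int.lt_floor_add_one m
  have haσ : -σ⁻¹ ≤ a := by
    have : (-1:ℝ)/σ ≤ ((k:ℝ) - m)/σ := by
      apply div_le_div_of_nonneg_right (by linarith) hσ.le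
    simpa [ha, neg_div] using this
  have hbσ : b ≤ σ⁻¹ := by
    have : ((k:ℝ) + 1 - m)/σ ≤ 1/σ := by
      apply div_le_div_of_nonneg_right (by linarith) hσ.le
    simpa [hb, one_div] using this
  set F : ℝ → ℝ := fun t => (P {ω | (X ω - m) / σ ≤ t}).toReal with hF
  -- boundedness
  have hF01 : ∀ t, 0 ≤ F t ∧ F t ≤ 1 := by
    intro t
    constructor
    · exact ENNReal.toReal_nonneg
    · exact ENNReal.toReal_le_of_le_ofReal zero_le_one (by simpa using prob_le_one)
  have hG01 : ∀ t, 0 ≤ stdGaussCDF t ∧ stdGaussCDF t ≤ 1 := by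
    intro t
    refine ⟨ENNReal.toReal_nonneg, ?_⟩
    exact ENNReal.toReal_le_of_le_ofReal zero_le_one (by simpa using prob_le_one)
  have hbdd : BddAbove (Set.range fun t => |F t - stdGaussCDF t|) := by
    refine ⟨1, ?_⟩
    rintro x ⟨t, rfl⟩
    have h1 := hF01 t; have h2 := hG01 t
    rw [abs_sub_le_iff]
    constructor <;> linarith [h1.1, h1.2, h2.1, h2.2]
  have hkol : kolDist P X = ⨆ t : ℝ, |F t - stdGaussCDF t| := rfl
  have hle : ∀ t, |F t - stdGaussCDF t| ≤ kolDist P X := by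
    intro t; rw [hkol]; exact le_ciSup hbdd t
  -- constancy of F on [a, b)
  have hconst : ∀ t, a ≤ t → t < b → F t = F a := by
    intro t hat htb
    have hset : {ω | (X ω - m) / σ ≤ t} = {ω | (X ω - m) / σ ≤ a} := by
      ext ω
      obtain ⟨j, hj⟩ := hint ω
      simp only [Set.mem_setOf_eq, hj]
      rw [div_le_iff₀ hσ, div_le_iff₀ hσ]
      have hbs : t * σ < (k:ℝ) + 1 - m := by
        calc t * σ < b * σ := mul_lt_mul_of_pos_right htb hσ
        _ = (k:ℝ) + 1 - m := by rw [hb]; field_simp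
      have has : (k:ℝ) - m ≤ t * σ := by
        calc (k:ℝ) - m = a * σ := by rw [ha]; field_simp
        _ ≤ t * σ := mul_le_mul_of_nonneg_right hat hσ.le
      have haa : a * σ = (k:ℝ) - m := by rw [ha]; field_simp
      rw [haa]
      constructor
      · intro h
        have : (j:ℝ) < (k:ℝ) + 1 := by linarith
        have : j < k + 1 := by exact_mod_cast this
        have : j ≤ k := by omega
        have : (j:ℝ) ≤ (k:ℝ) := by exact_mod_cast this
        linarith
      · intro h; linarith
    rw [hF]; simp only [hset]
  -- pdf lower bound on [a,b] and integral bounds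
  have hInt : Integrable (gaussianPDFReal 0 1) := integrable_gaussianPDFReal 0 1
  set c : ℝ := (Real.sqrt (2 * Real.pi))⁻¹ * Real.exp (-(σ⁻¹) ^ 2 / 2) with hc
  have hgap : σ⁻¹ * c ≤ stdGaussCDF b - stdGaussCDF a := by
    rw [stdGaussCDF_eq', stdGaussCDF_eq',
      intervalIntegral.integral_Iic_sub_Iic hInt.integrableOn hInt.integrableOn,
      intervalIntegral.integral_of_le hab.le]
    have hvol : (volume (Set.Ioc a b)).toReal = σ⁻¹ := by
      rw [Real.volume_Ioc, ENNReal.toReal_ofReal (by linarith), hba]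
    calc σ⁻¹ * c = c * (volume (Set.Ioc a b)).toReal := by rw [hvol]; ring
      _ ≤ ∫ x in Set.Ioc a b, gaussianPDFReal 0 1 x := by
        apply setIntegral_ge_of_const_le_real measurableSet_Ioc
          (by rw [Real.volume_Ioc]; exact ENNReal.ofReal_ne_top) _ hInt.integrableOn
        intro x hx
        rw [gaussianPDFReal_one', hc]
        have hx1 : -σ⁻¹ ≤ x := le_trans haσ (le_of_lt hx.1)
        have hx2 : x ≤ σ⁻¹ := le_trans hx.2 hbσ
        have : x ^ 2 ≤ (σ⁻¹) ^ 2 := sq_le_sq' (by linarith) hx2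
        have := Real.exp_le_exp.2 (by linarith : -(σ⁻¹)^2/2 ≤ -x^2/2)
        have h0 : (0:ℝ) ≤ (Real.sqrt (2 * Real.pi))⁻¹ := by positivity
        exact mul_le_mul_of_nonneg_left this h0
  -- |F a - Φ a| ≤ D
  have h1 : |F a - stdGaussCDF a| ≤ kolDist P X := hle a
  -- |F a - Φ b| ≤ D   (via continuity / upper bound on density)
  have h2 : |F a - stdGaussCDF b| ≤ kolDist P X := by
    apply le_of_forall_pos_le_add
    intro ε hε
    set t : ℝ := max a (b - ε * Real.sqrt (2 * Real.pi)) with ht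
    have hta : a ≤ t := le_max_left _ _
    have htb : t < b := by
      apply max_lt hab
      have : 0 < ε * Real.sqrt (2 * Real.pi) := by positivity
      linarith
    have hdiff : stdGaussCDF b - stdGaussCDF t =
        ∫ x in Set.Ioc t b, gaussianPDFReal 0 1 x := by
      rw [stdGaussCDF_eq', stdGaussCDF_eq',
        intervalIntegral.integral_Iic_sub_Iic hInt.integrableOn hInt.integrableOn,
        intervalIntegral.integral_of_le htb.le]
    have hnn : 0 ≤ stdGaussCDF b - stdGaussCDF t := by
      rw [hdiff]
      exact integral_nonneg fun x => gaussianPDFReal_nonneg _ _ _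
    have hup : stdGaussCDF b - stdGaussCDF t ≤ ε := by
      rw [hdiff]
      have hM : ∀ x ∈ Set.Ioc t b, gaussianPDFReal 0 1 x ≤ (Real.sqrt (2 * Real.pi))⁻¹ := by
        intro x _
        rw [gaussianPDFReal_one']
        have : Real.exp (-x^2/2) ≤ 1 := Real.exp_le_one_iff.2 (by nlinarith [sq_nonneg x])
        calc (Real.sqrt (2 * Real.pi))⁻¹ * Real.exp (-x^2/2)
            ≤ (Real.sqrt (2 * Real.pi))⁻¹ * 1 :=
              mul_le_mul_of_nonneg_left this (by positivity)
          _ = (Real.sqrt (2 * Real.pi))⁻¹ := mul_one _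
      calc ∫ x in Set.Ioc t b, gaussianPDFReal 0 1 x
          ≤ ∫ _x in Set.Ioc t b, (Real.sqrt (2 * Real.pi))⁻¹ :=
            setIntegral_mono_on hInt.integrableOn (integrableOn_const (by
              rw [Real.volume_Ioc]; exact ENNReal.ofReal_ne_top)) measurableSet_Ioc hM
        _ = (volume (Set.Ioc t b)).toReal * (Real.sqrt (2 * Real.pi))⁻¹ := by
            rw [setIntegral_const, smul_eq_mul, measureReal_def]
        _ ≤ ε := by
            rw [Real.volume_Ioc, ENNReal.toReal_ofReal (by linarith)]
            have hbt : b - t ≤ ε * Real.sqrt (2 * Real.pi) := by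
              have : b - ε * Real.sqrt (2 * Real.pi) ≤ t := le_max_right _ _
              linarith
            calc (b - t) * (Real.sqrt (2 * Real.pi))⁻¹
                ≤ (ε * Real.sqrt (2 * Real.pi)) * (Real.sqrt (2 * Real.pi))⁻¹ := by
                  apply mul_le_mul_of_nonneg_right hbt (by positivity)
              _ = ε := by field_simp
    have hFt : F t = F a := hconst t hta htb
    have := hle t
    rw [hFt] at this
    calc |F a - stdGaussCDF b| ≤ |F a - stdGaussCDF t| + |stdGaussCDF t - stdGaussCDF b| :=
          abs_sub_le _ _ _
      _ ≤ kolDist P X + ε := by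
          have : |stdGaussCDF t - stdGaussCDF b| ≤ ε := by
            rw [abs_sub_comm, abs_of_nonneg hnn]; exact hup
          linarith [hle t, hFt ▸ hle t, this]
  -- assemble
  have htri : stdGaussCDF b - stdGaussCDF a ≤ 2 * kolDist P X := by
    have := abs_sub_le (stdGaussCDF b) (F a) (stdGaussCDF a)
    have e1 : |stdGaussCDF b - F a| = |F a - stdGaussCDF b| := abs_sub_comm _ _
    have e2 : |F a - stdGaussCDF a| ≤ kolDist P X := h1
    calc stdGaussCDF b - stdGaussCDF a ≤ |stdGaussCDF b - stdGaussCDF a| := le_abs_self _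
      _ ≤ |stdGaussCDF b - F a| + |F a - stdGaussCDF a| := abs_sub_le _ _ _
      _ ≤ kolDist P X + kolDist P X := by rw [e1]; exact add_le_add h2 e2
      _ = 2 * kolDist P X := by ring
  have : σ⁻¹ * c ≤ 2 * kolDist P X := le_trans hgap htri
  rw [hc] at this
  linarith

end
end
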